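/- Let $\Pl$ be an Archimedean plausibility measure on a locally finite test space, $V$ the $\mathbb{Q}$-vector space with basis $X$, and $C$ the convex cone generated by $\{e_A - e_B : \Pl(A) \succeq \Pl(B)\}$. If $A$ and $B$ are events with $\Pl(A) \prec \Pl(B)$, then $e_A - e_B \notin C$. -/

import Mathlib

open Finset

/-- A (locally finite) test space: a set of finite tests covering the outcome set. -/
structure TSpace (X : Type*) where
  tests : Set (Finset X)
  covers : ∀ x : X, ∃ T ∈ tests, x ∈ T

/-- An event is a subset of some test. -/
def TSpace.IsEvent {X : Type*} (S : TSpace X) (A : Finset X) : Prop :=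
  ∃ T ∈ S.tests, A ⊆ T

/-- A probability measure on a test space. -/
def IsProbMeasure {X : Type*} (S : TSpace X) (μ : X → ℝ) : Prop :=
  (∀ x, 0 ≤ μ x) ∧ ∀ T ∈ S.tests, ∑ x ∈ T, μ x = 1

/-- Extension of a probability measure to events. -/
def mval {X : Type*} (μ : X → ℝ) (A : Finset X) : ℝ := ∑ x ∈ A, μ x

/-- A plausibility measure on a test space, valued in a poset `D`. -/
structure PlausMeasure {X : Type*} (S : TSpace X) (D : Type*) [PartialOrder D] where
  Pl : Finset X → D
  eq_tests : ∀ T ∈ S.tests, ∀ R ∈ S.tests, Pl T = Pl R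
  mono : ∀ A B : Finset X, S.IsEvent B → A ⊆ B → Pl A ≤ Pl B
  pos : ∀ T ∈ S.tests, Pl ∅ < Pl T

open scoped Classical in
/-- The Archimedean condition for a plausibility assignment. -/
def IsArch {X D : Type*} [PartialOrder D] (S : TSpace X) (Pl : Finset X → D) : Prop :=
  ∀ (n : ℕ) (A B : Fin (n + 1) → Finset X),
    (∀ i, S.IsEvent (A i)) → (∀ i, S.IsEvent (B i)) →
    (∀ x : X, (univ.filter fun i => x ∈ A i).card = (univ.filter fun i => x ∈ B i).card) →
    (∀ i : Fin n, Pl (A i.castSucc) ≤ Pl (B i.castSucc)) →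
    Pl (B (Fin.last n)) ≤ Pl (A (Fin.last n))
/-- The convex cone generated by a set `S`: all finite nonnegative rational
linear combinations of elements of `S`. -/
def coneGen {V : Type*} [AddCommGroup V] [Module ℚ V] (S : Set V) : Set V :=
  {v | ∃ (n : ℕ) (c : Fin n → ℚ) (s : Fin n → V),
    (∀ i, 0 ≤ c i) ∧ (∀ i, s i ∈ S) ∧ v = ∑ i, c i • s i}

/-- The basis vector sum `e_A = ∑_{x ∈ A} e_x` in the free `ℚ`-vector space on `X`. -/
noncomputable def eVec {X : Type*} (A : Finset X) : X →₀ ℚ :=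
  ∑ x ∈ A, Finsupp.single x 1



private lemma countP_card_aux {α : Type*} (L : List α) (p : α → Bool) :
    (Finset.univ.filter fun i : Fin L.length => p (L.get i)).card = L.countP p := by
  induction L with
  | nil => simp
  | cons a t ih =>
    rw [Finset.card_filter, List.countP_cons, ← ih, Finset.card_filter]
    simp only [List.length_cons]
    rw [Fin.sum_univ_succ]
    simp [add_comm]
    exact if_congr Iff.rfl rfl rfl

private lemma countP_card_prop {α : Type*} (L : List α) (k : ℕ) (h : L.length = k)
    (p : α → Prop) [DecidablePred p] :
    (Finset.univ.filter fun i : Fin k => p (L.get (Fin.cast h.symm i))).card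
      = L.countP fun a => decide (p a) := by
  subst h
  rw [← countP_card_aux L (fun a => decide (p a)), Finset.card_filter, Finset.card_filter]
  exact Finset.sum_congr rfl fun i _ => by simp

private lemma eVec_apply {X : Type*} [DecidableEq X] (C : Finset X) (x : X) :
    eVec C x = (if x ∈ C then (1 : ℚ) else 0) := by
  classical
  simp only [eVec, Finsupp.finset_sum_apply, Finsupp.single_apply]
  rw [Finset.sum_ite_eq' C x (fun _ => (1 : ℚ))]

/-- For an Archimedean plausibility measure, `Pl(A) ≺ Pl(B)` implies that `e_A - e_B`
is not in the cone generated by the differences `e_A' - e_B'` with `Pl(A') ⪰ Pl(B')`. -/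
theorem stmt11 {X D : Type*} [PartialOrder D] (S : TSpace X) (P : PlausMeasure S D)
    (hArch : IsArch S P.Pl) (A B : Finset X) (hA : S.IsEvent A) (hB : S.IsEvent B)
    (hlt : P.Pl A < P.Pl B) :
    eVec A - eVec B ∉ coneGen {v | ∃ A' B' : Finset X, S.IsEvent A' ∧ S.IsEvent B' ∧
      P.Pl B' ≤ P.Pl A' ∧ v = eVec A' - eVec B'} := by
  classical
  rintro ⟨n, c, s, hc, hs, heq⟩
  choose A' B' hA' hB' hPl hsv using hs
  set N : ℕ := ∏ j, (c j).den with hNdef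
  have hN : 0 < N := Finset.prod_pos fun j _ => (c j).pos
  set m : Fin n → ℕ := fun i => (c i).num.toNat * ∏ j ∈ Finset.univ.erase i, (c j).den
    with hmdef
  have hm : ∀ i, (m i : ℚ) = c i * N := by
    intro i
    have hnum : ((c i).num.toNat : ℤ) = (c i).num :=
      Int.toNat_of_nonneg (Rat.num_nonneg.mpr (hc i))
    have hnum' : (((c i).num.toNat : ℕ) : ℚ) = ((c i).num : ℚ) := by exact_mod_cast hnum
    have hd : ((c i).den : ℚ) ≠ 0 := Nat.cast_ne_zero.mpr (c i).den_nz
    have h3 : c i * ((c i).den : ℚ) = ((c i).num : ℚ) := by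
      have := div_mul_cancel₀ ((c i).num : ℚ) hd
      rwa [Rat.num_div_den] at this
    have h2 : ((c i).den : ℚ) * ∏ j ∈ Finset.univ.erase i, ((c j).den : ℚ) = (N : ℚ) := by
      rw [hNdef]; push_cast
      exact Finset.mul_prod_erase Finset.univ (fun j => ((c j).den : ℚ)) (Finset.mem_univ i)
    show (((c i).num.toNat * ∏ j ∈ Finset.univ.erase i, (c j).den : ℕ) : ℚ) = c i * N
    push_cast
    rw [hnum', ← h2, ← mul_assoc, h3]
  -- coordinate equation
  have hx : ∀ x, eVec A x - eVec B x = ∑ i, c i * (eVec (A' i) x - eVec (B' i) x) := by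
    intro x
    have := congrArg (fun v : X →₀ ℚ => v x) heq
    simpa [Finsupp.sub_apply, Finsupp.finset_sum_apply, Finsupp.smul_apply,
      smul_eq_mul, hsv] using this
  have keyQ : ∀ x, (N : ℚ) * eVec A x + ∑ i, (m i : ℚ) * eVec (B' i) x
      = (N : ℚ) * eVec B x + ∑ i, (m i : ℚ) * eVec (A' i) x := by
    intro x
    have h1 : (N : ℚ) * (eVec A x - eVec B x)
        = ∑ i, (m i : ℚ) * (eVec (A' i) x - eVec (B' i) x) := by
      rw [hx x, Finset.mul_sum]
      exact Finset.sum_congr rfl fun i _ => by rw [hm i]; ring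
    simp only [mul_sub] at h1
    rw [Finset.sum_sub_distrib] at h1
    linarith [h1]
  -- natural number version
  have key : ∀ x, N * (if x ∈ A then 1 else 0) + ∑ i, m i * (if x ∈ B' i then 1 else 0)
      = N * (if x ∈ B then 1 else 0) + ∑ i, m i * (if x ∈ A' i then 1 else 0) := by
    intro x
    have hq := keyQ x
    simp only [eVec_apply] at hq
    refine Nat.cast_inj (R := ℚ) |>.mp ?_
    push_cast [apply_ite (fun t : ℕ => (t : ℚ))]
    convert hq using 2
  -- build the list
  set L0 : List (Finset X × Finset X) :=
    List.replicate (N - 1) (A, B)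
      ++ (List.finRange n).flatMap (fun i => List.replicate (m i) (B' i, A' i)) with hL0
  set Lf : List (Finset X × Finset X) := L0 ++ [(A, B)] with hLf
  have hlen : Lf.length = L0.length + 1 := by simp [hLf]
  set M := L0.length with hM
  have hmemf : ∀ p ∈ Lf, (p = (A, B)) ∨ ∃ j, p = (B' j, A' j) := by
    intro p hp
    simp only [hLf, hL0, List.mem_append, List.mem_replicate, List.mem_flatMap,
      List.mem_singleton] at hp
    rcases hp with (⟨_, h⟩ | ⟨j, _, _, h⟩) | h
    · exact Or.inl h
    · exact Or.inr ⟨j, h⟩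
    · exact Or.inl h
  have hmem0 : ∀ p ∈ L0, P.Pl p.1 ≤ P.Pl p.2 := by
    intro p hp
    simp only [hL0, List.mem_append, List.mem_replicate, List.mem_flatMap] at hp
    rcases hp with ⟨_, h⟩ | ⟨j, _, _, h⟩
    · rw [h]; exact hlt.le
    · rw [h]; exact hPl j
  -- countP expansion
  have expand : ∀ q : Finset X × Finset X → Bool,
      Lf.countP q = ((if q (A, B) then N - 1 else 0)
        + ∑ j, (if q (B' j, A' j) then m j else 0))
        + (if q (A, B) then 1 else 0) := by
    intro q
    rw [hLf, hL0, List.countP_append, List.countP_append, List.countP_replicate,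
      List.countP_flatMap]
    congr 1
    · congr 1
      rw [show (List.countP q ∘ fun i => List.replicate (m i) (B' i, A' i))
            = fun i => List.countP q (List.replicate (m i) (B' i, A' i)) from rfl]
      rw [← List.ofFn_eq_map, List.sum_ofFn]
      exact Finset.sum_congr rfl fun j _ => by rw [List.countP_replicate]
    · simp [List.countP_cons]
  -- apply the Archimedean condition
  refine absurd ?_ hlt.not_ge
  have harch := hArch M (fun i => (Lf.get (Fin.cast hlen.symm i)).1)
      (fun i => (Lf.get (Fin.cast hlen.symm i)).2) ?ev1 ?ev2 ?cnt ?prem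
  case ev1 =>
    intro i
    show S.IsEvent (Lf.get (Fin.cast hlen.symm i)).1
    have hmem : Lf.get (Fin.cast hlen.symm i) ∈ Lf := by
      rw [List.get_eq_getElem]; exact List.getElem_mem _
    rcases hmemf _ hmem with h | ⟨j, h⟩
    · rw [h]; exact hA
    · rw [h]; exact hB' j
  case ev2 =>
    intro i
    show S.IsEvent (Lf.get (Fin.cast hlen.symm i)).2
    have hmem : Lf.get (Fin.cast hlen.symm i) ∈ Lf := by
      rw [List.get_eq_getElem]; exact List.getElem_mem _
    rcases hmemf _ hmem with h | ⟨j, h⟩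
    · rw [h]; exact hB
    · rw [h]; exact hA' j
  case cnt =>
    intro x
    show (univ.filter fun i : Fin (M + 1) => x ∈ (Lf.get (Fin.cast hlen.symm i)).1).card
        = (univ.filter fun i : Fin (M + 1) => x ∈ (Lf.get (Fin.cast hlen.symm i)).2).card
    rw [countP_card_prop Lf (M + 1) hlen (fun p => x ∈ p.1),
      countP_card_prop Lf (M + 1) hlen (fun p => x ∈ p.2), expand, expand]
    simp only [decide_eq_true_eq]
    have hkey := key x
    have esum : ∀ (f : Fin n → Finset X), (∑ j, if x ∈ f j then m j else 0)
        = ∑ j, m j * (if x ∈ f j then 1 else 0) :=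
      fun f => Finset.sum_congr rfl fun j _ => by split <;> simp
    rw [esum B', esum A']
    have combine : ∀ (C : Finset X) (T : ℕ),
        ((if x ∈ C then N - 1 else 0) + T) + (if x ∈ C then 1 else 0)
          = N * (if x ∈ C then 1 else 0) + T := by
      intro C T
      split <;> simp <;> omega
    rw [combine, combine]
    exact hkey
  case prem =>
    intro i
    show P.Pl (Lf.get (Fin.cast hlen.symm i.castSucc)).1
        ≤ P.Pl (Lf.get (Fin.cast hlen.symm i.castSucc)).2
    have hi : (i : ℕ) < L0.length := i.isLt
    have hget : Lf.get (Fin.cast hlen.symm i.castSucc) = L0[(i : ℕ)]'hi := by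
      show (L0 ++ [(A, B)])[(i : ℕ)]'_ = _
      exact List.getElem_append_left hi
    have hmem : L0[(i : ℕ)]'hi ∈ L0 := List.getElem_mem hi
    rw [hget]
    exact hmem0 _ hmem
  have hgetlast : Lf.get (Fin.cast hlen.symm (Fin.last M)) = (A, B) := by
    show (L0 ++ [(A, B)])[(M : ℕ)]'_ = _
    exact List.getElem_concat_length (l := L0) (a := (A, B)) (i := M) rfl _
  simpa only [hgetlast] using harch
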